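/- arXiv:1702.08031 — 4 statements merged into one kernel-verified Lean document; each statement's English description precedes it below -/
import Mathlib

section
/- Let $0 < \alpha < \beta$, and suppose $u, f : \mathbb{R} \to \mathbb{R}$ are bounded continuous with $f$ nonnegative and nondecreasing, and $u(t) \leq f(t) + \alpha\int_0^\infty e^{-\beta\tau} u(t-\tau)\,d\tau$ for all $t$, with $u \geq 0$. Then $u(t) \leq f(t) + \alpha \int_0^\infty e^{-(\beta-\alpha)\tau} f(t-\tau)\,d\tau \leq \frac{\beta}{\beta-\alpha} f(t)$ for all $t$. -/
open MeasureTheory Set Real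


lemma myIntOn (b : ℝ) (hb : 0 < b) (h : ℝ → ℝ) (hc : Continuous h) (C : ℝ)
    (hC : ∀ s, |h s| ≤ C) (t : ℝ) :
    IntegrableOn (fun τ => Real.exp (-b * τ) * h (t - τ)) (Ioi 0) := by
  apply Integrable.mono' ((exp_neg_integrableOn_Ioi 0 hb).const_mul C)
  · exact (((Real.continuous_exp.comp (continuous_const.mul continuous_id)).mul
      (hc.comp (continuous_const.sub continuous_id))).aestronglyMeasurable).restrict
  · filter_upwards with τ
    rw [norm_mul, Real.norm_eq_abs, Real.norm_eq_abs, Real.abs_exp]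
    calc Real.exp (-b*τ) * |h (t-τ)| ≤ Real.exp (-b*τ) * C :=
          mul_le_mul_of_nonneg_left (hC _) (Real.exp_pos _).le
      _ = C * Real.exp (-b*τ) := mul_comm _ _

lemma myHasDeriv (b : ℝ) (hb : b ≠ 0) (x : ℝ) :
    HasDerivAt (fun x => -Real.exp (-b*x)/b) (Real.exp (-b*x)) x := by
  have h1 : HasDerivAt (fun x : ℝ => -b*x) (-b) x := by
    simpa using (hasDerivAt_id x).const_mul (-b)
  have h2 := ((Real.hasDerivAt_exp (-b*x)).comp x h1).neg.div_const b
  exact h2.congr_deriv (by field_simp)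

lemma myIntExp (b : ℝ) (hb : 0 < b) : (∫ τ in Ioi (0:ℝ), Real.exp (-b * τ)) = 1 / b := by
  have hlim : Filter.Tendsto (fun x => -Real.exp (-b*x)/b) Filter.atTop (nhds 0) := by
    have : Filter.Tendsto (fun x : ℝ => -b*x) Filter.atTop Filter.atBot := by
      exact Filter.Tendsto.const_mul_atTop_of_neg (neg_neg_iff_pos.mpr hb) Filter.tendsto_id
    have := (Real.tendsto_exp_atBot.comp this).neg.div_const b
    simpa using this
  have := integral_Ioi_of_hasDerivAt_of_tendsto' (fun x _ => myHasDeriv b hb.ne' x)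
    (exp_neg_integrableOn_Ioi 0 hb) hlim
  rw [this]; field_simp
  simp


lemma myIntExpIoo (b : ℝ) (hb : 0 < b) (r : ℝ) (hr : 0 < r) :
    (∫ τ in Ioo (0:ℝ) r, Real.exp (-b * τ)) = (1 - Real.exp (-b*r)) / b := by
  rw [← integral_Ioc_eq_integral_Ioo, ← intervalIntegral.integral_of_le hr.le]
  rw [intervalIntegral.integral_eq_sub_of_hasDerivAt
    (fun x _ => myHasDeriv b hb.ne' x)
    ((Real.continuous_exp.comp (continuous_const.mul continuous_id)).intervalIntegrable 0 r)]
  simp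
  ring

-- translation lemma: ∫ r in Ioi τ, exp (-c*(r-τ)) * f (t - r) = ∫ σ in Ioi 0, exp (-c*σ) * f ((t-τ) - σ)
lemma myShift (c : ℝ) (f : ℝ → ℝ) (t τ : ℝ) :
    (∫ r in Ioi τ, Real.exp (-c*(r-τ)) * f (t - r)) =
      ∫ σ in Ioi (0:ℝ), Real.exp (-c*σ) * f ((t - τ) - σ) := by
  have key : ∀ r : ℝ, (Ioi τ).indicator (fun r => Real.exp (-c*(r-τ)) * f (t - r)) r
      = (Ioi (0:ℝ)).indicator (fun σ => Real.exp (-c*σ) * f ((t - τ) - σ)) (r - τ) := by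
    intro r
    by_cases h : τ < r
    · rw [Set.indicator_of_mem (mem_Ioi.mpr h), Set.indicator_of_mem (mem_Ioi.mpr (by simpa [sub_pos] using h))]
      have : t - τ - (r - τ) = t - r := by ring
      rw [this]
    · rw [Set.indicator_of_notMem (fun hh => h (mem_Ioi.mp hh)),
        Set.indicator_of_notMem (fun hh => h (by simpa [sub_pos] using mem_Ioi.mp hh))]
  rw [← integral_indicator measurableSet_Ioi]
  simp_rw [key]
  rw [integral_sub_right_eq_self (fun σ => (Ioi (0:ℝ)).indicator (fun σ => Real.exp (-c*σ) * f ((t - τ) - σ)) σ) τ]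
  rw [integral_indicator measurableSet_Ioi]


lemma myKey (α β : ℝ) (hα : 0 < α) (hαβ : α < β) (f : ℝ → ℝ) (hfc : Continuous f)
    (C : ℝ) (hfb : ∀ s, |f s| ≤ C) (t : ℝ) :
    (∫ τ in Ioi (0:ℝ), Real.exp (-β*τ) * ∫ σ in Ioi (0:ℝ), Real.exp (-(β-α)*σ) * f ((t - τ) - σ))
    = ((∫ σ in Ioi (0:ℝ), Real.exp (-(β-α)*σ) * f (t - σ))
        - ∫ τ in Ioi (0:ℝ), Real.exp (-β*τ) * f (t - τ)) / α := by
  have hβ : 0 < β := hα.trans hαβ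
  set c : ℝ := β - α with hcdef
  have hc : 0 < c := sub_pos.mpr hαβ
  have hC : 0 ≤ C := (abs_nonneg _).trans (hfb 0)
  set F : ℝ → ℝ → ℝ := fun τ r =>
    (Ioi τ).indicator (fun r => Real.exp (-β*τ) * (Real.exp (-c*(r-τ)) * f (t - r))) r with hF
  -- exponential algebra
  have hexp : ∀ τ r : ℝ, Real.exp (-β*τ) * Real.exp (-c*(r-τ))
      = Real.exp (-α*τ) * Real.exp (-c*r) := by
    intro τ r
    rw [← Real.exp_add, ← Real.exp_add]
    congr 1
    rw [hcdef]; ring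
  -- Step 1
  have step1 : ∀ τ ∈ Ioi (0:ℝ),
      Real.exp (-β*τ) * (∫ σ in Ioi (0:ℝ), Real.exp (-c*σ) * f ((t - τ) - σ))
        = ∫ r in Ioi (0:ℝ), F τ r := by
    intro τ hτ
    rw [hF]
    rw [setIntegral_indicator measurableSet_Ioi]
    rw [Ioi_inter_Ioi, max_eq_right (le_of_lt hτ)]
    rw [MeasureTheory.integral_const_mul, myShift]
  -- Step 2
  have step2 : ∀ r : ℝ, (∫ τ in Ioi (0:ℝ), F τ r)
      = (Ioi (0:ℝ)).indicator
          (fun r => ((Real.exp (-c*r) - Real.exp (-β*r))/α) * f (t - r)) r := by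
    intro r
    have hfun : (fun τ => F τ r) = (Iio r).indicator
        (fun τ => Real.exp (-β*τ) * (Real.exp (-c*(r-τ)) * f (t - r))) := by
      funext τ
      simp only [hF, Set.indicator_apply, mem_Ioi, mem_Iio]
    rw [hfun, setIntegral_indicator measurableSet_Iio]
    have : Ioi (0:ℝ) ∩ Iio r = Ioo 0 r := Ioi_inter_Iio
    rw [this]
    by_cases hr : 0 < r
    · rw [Set.indicator_of_mem (mem_Ioi.mpr hr)]
      have hint : ∀ τ : ℝ, Real.exp (-β*τ) * (Real.exp (-c*(r-τ)) * f (t - r))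
          = (Real.exp (-c*r) * f (t - r)) * Real.exp (-α*τ) := by
        intro τ
        rw [← mul_assoc, hexp]
        ring
      simp_rw [hint]
      rw [MeasureTheory.integral_const_mul, myIntExpIoo α hα r hr]
      have hsplit : Real.exp (-β*r) = Real.exp (-c*r) * Real.exp (-α*r) := by
        rw [← Real.exp_add]; congr 1; rw [hcdef]; ring
      rw [hsplit]
      ring
    · rw [Set.indicator_of_notMem (fun hh => hr (mem_Ioi.mp hh))]
      have : Ioo (0:ℝ) r = ∅ := Ioo_eq_empty hr
      simp [this]
  -- Step 3: Fubini
  have hFunc : (fun p : ℝ × ℝ => F p.1 p.2) = {q : ℝ × ℝ | q.1 < q.2}.indicator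
      (fun q => Real.exp (-β*q.1) * (Real.exp (-c*(q.2-q.1)) * f (t - q.2))) := by
    funext p
    simp only [hF, Set.indicator_apply, mem_Ioi, mem_setOf_eq]
  have hmeas : MeasurableSet {q : ℝ × ℝ | q.1 < q.2} :=
    measurableSet_lt measurable_fst measurable_snd
  have hcont : Continuous (fun q : ℝ×ℝ =>
      Real.exp (-β*q.1) * (Real.exp (-c*(q.2-q.1)) * f (t - q.2))) := by fun_prop
  have hH : Integrable (fun p : ℝ×ℝ => (C * Real.exp (-α*p.1)) * Real.exp (-c*p.2))
      ((volume.restrict (Ioi (0:ℝ))).prod (volume.restrict (Ioi (0:ℝ)))) :=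
    Integrable.mul_prod ((exp_neg_integrableOn_Ioi 0 hα).const_mul C)
      (exp_neg_integrableOn_Ioi 0 hc)
  have hFint : Integrable (Function.uncurry F)
      ((volume.restrict (Ioi (0:ℝ))).prod (volume.restrict (Ioi (0:ℝ)))) := by
    have : Function.uncurry F = fun p : ℝ×ℝ => F p.1 p.2 := rfl
    rw [this, hFunc]
    apply Integrable.mono' hH
    · exact hcont.aestronglyMeasurable.indicator hmeas
    · filter_upwards with p
      by_cases h : p.1 < p.2
      · simp only [Set.indicator_apply, mem_setOf_eq, if_pos h]
        rw [Real.norm_eq_abs, abs_mul, abs_mul, Real.abs_exp, Real.abs_exp]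
        calc Real.exp (-β*p.1) * (Real.exp (-c*(p.2-p.1)) * |f (t - p.2)|)
            = (Real.exp (-β*p.1) * Real.exp (-c*(p.2-p.1))) * |f (t - p.2)| := by ring
          _ ≤ (Real.exp (-β*p.1) * Real.exp (-c*(p.2-p.1))) * C :=
              mul_le_mul_of_nonneg_left (hfb _) (by positivity)
          _ = (C * Real.exp (-α*p.1)) * Real.exp (-c*p.2) := by rw [hexp]; ring
      · simp only [Set.indicator_apply, mem_setOf_eq, if_neg h, norm_zero]
        positivity
  calc (∫ τ in Ioi (0:ℝ), Real.exp (-β*τ) * ∫ σ in Ioi (0:ℝ), Real.exp (-c*σ) * f ((t - τ) - σ))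
      = ∫ τ in Ioi (0:ℝ), ∫ r in Ioi (0:ℝ), F τ r :=
        setIntegral_congr_fun measurableSet_Ioi (fun τ hτ => step1 τ hτ)
    _ = ∫ r in Ioi (0:ℝ), ∫ τ in Ioi (0:ℝ), F τ r := integral_integral_swap hFint
    _ = ∫ r in Ioi (0:ℝ), (Ioi (0:ℝ)).indicator
          (fun r => ((Real.exp (-c*r) - Real.exp (-β*r))/α) * f (t - r)) r :=
        setIntegral_congr_fun measurableSet_Ioi (fun r _ => step2 r)
    _ = ∫ r in Ioi (0:ℝ) ∩ Ioi (0:ℝ), ((Real.exp (-c*r) - Real.exp (-β*r))/α) * f (t - r) :=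
        setIntegral_indicator measurableSet_Ioi
    _ = ∫ r in Ioi (0:ℝ), ((Real.exp (-c*r) - Real.exp (-β*r))/α) * f (t - r) := by
        rw [inter_self]
    _ = ((∫ σ in Ioi (0:ℝ), Real.exp (-c*σ) * f (t - σ))
        - ∫ τ in Ioi (0:ℝ), Real.exp (-β*τ) * f (t - τ)) / α := by
        have hptw : ∀ r : ℝ, ((Real.exp (-c*r) - Real.exp (-β*r))/α) * f (t - r)
            = (1/α)*(Real.exp (-c*r)*f (t - r)) - (1/α)*(Real.exp (-β*r)*f (t - r)) := by
          intro r; ring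
        simp_rw [hptw]
        rw [integral_sub ((myIntOn c hc f hfc C hfb t).const_mul _)
          ((myIntOn β hβ f hfc C hfb t).const_mul _),
          MeasureTheory.integral_const_mul, MeasureTheory.integral_const_mul]
        ring


theorem stmt3 (α β : ℝ) (hα : 0 < α) (hαβ : α < β)
    (u f : ℝ → ℝ) (huc : Continuous u) (hub : ∃ C, ∀ t, |u t| ≤ C)
    (hfc : Continuous f) (hfb : ∃ C, ∀ t, |f t| ≤ C)
    (hfpos : ∀ t, 0 ≤ f t) (hfmono : Monotone f) (hupos : ∀ t, 0 ≤ u t)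
    (hineq : ∀ t, u t ≤ f t + α * ∫ τ in Ioi (0:ℝ), Real.exp (-β * τ) * u (t - τ)) :
    ∀ t, u t ≤ f t + α * ∫ τ in Ioi (0:ℝ), Real.exp (-(β - α) * τ) * f (t - τ) ∧
      f t + (α * ∫ τ in Ioi (0:ℝ), Real.exp (-(β - α) * τ) * f (t - τ))
        ≤ (β / (β - α)) * f t := by
  obtain ⟨Cu, hCu⟩ := hub
  obtain ⟨C, hC⟩ := hfb
  have hβ : 0 < β := hα.trans hαβ
  have hc : 0 < β - α := sub_pos.mpr hαβ
  have hC0 : 0 ≤ C := (abs_nonneg _).trans (hC 0)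
  set g : ℝ → ℝ := fun s => ∫ σ in Ioi (0:ℝ), Real.exp (-(β-α)*σ) * f (s - σ) with hg
  -- g is nonnegative
  have hgpos : ∀ s, 0 ≤ g s := fun s =>
    setIntegral_nonneg measurableSet_Ioi fun σ _ =>
      mul_nonneg (Real.exp_pos _).le (hfpos _)
  -- g s ≤ f s / (β - α)
  have hgle : ∀ s, g s ≤ f s / (β - α) := by
    intro s
    have hmono : ∀ σ ∈ Ioi (0:ℝ), Real.exp (-(β-α)*σ) * f (s - σ)
        ≤ Real.exp (-(β-α)*σ) * f s :=
      fun σ hσ => mul_le_mul_of_nonneg_left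
        (hfmono (by linarith [mem_Ioi.mp hσ])) (Real.exp_pos _).le
    calc g s ≤ ∫ σ in Ioi (0:ℝ), Real.exp (-(β-α)*σ) * f s :=
          setIntegral_mono_on (myIntOn _ hc f hfc C hC s)
            ((exp_neg_integrableOn_Ioi 0 hc).mul_const (f s)) measurableSet_Ioi hmono
      _ = (1/(β-α)) * f s := by rw [integral_mul_const, myIntExp _ hc]
      _ = f s / (β - α) := by ring
  -- g bounded
  have hgbd : ∀ s, |g s| ≤ C / (β - α) := by
    intro s
    rw [abs_of_nonneg (hgpos s)]
    have hfsC : f s ≤ C := (le_abs_self _).trans (hC s)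
    exact (hgle s).trans (by gcongr)
  -- g continuous
  have hgcont : Continuous g := by
    rw [hg]
    apply continuous_of_dominated (bound := fun σ => C * Real.exp (-(β-α)*σ))
    · intro s
      exact (((Real.continuous_exp.comp (continuous_const.mul continuous_id)).mul
        (hfc.comp (continuous_const.sub continuous_id))).aestronglyMeasurable).restrict
    · intro s
      filter_upwards with σ
      rw [norm_mul, Real.norm_eq_abs, Real.norm_eq_abs, Real.abs_exp]
      calc Real.exp (-(β-α)*σ) * |f (s-σ)| ≤ Real.exp (-(β-α)*σ) * C :=
            mul_le_mul_of_nonneg_left (hC _) (Real.exp_pos _).le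
        _ = C * Real.exp (-(β-α)*σ) := mul_comm _ _
    · exact (exp_neg_integrableOn_Ioi 0 hc).const_mul C
    · filter_upwards with σ
      exact (continuous_const.mul (hfc.comp (continuous_id.sub continuous_const)))
  -- key identity
  have key : ∀ s, (∫ τ in Ioi (0:ℝ), Real.exp (-β*τ) * g (s - τ))
      = (g s - ∫ τ in Ioi (0:ℝ), Real.exp (-β*τ) * f (s - τ)) / α :=
    fun s => myKey α β hα hαβ f hfc C hC s
  -- definition of w
  set w : ℝ → ℝ := fun s => f s + α * g s with hw
  have hwcont : Continuous w := hfc.add (continuous_const.mul hgcont)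
  have hwbd : ∀ s, |w s| ≤ C + α * (C/(β-α)) := by
    intro s
    calc |w s| ≤ |f s| + |α * g s| := abs_add_le _ _
      _ ≤ C + α * (C/(β-α)) := by
          rw [abs_mul, abs_of_pos hα]
          exact add_le_add (hC s) (mul_le_mul_of_nonneg_left (hgbd s) hα.le)
  -- convolution of w
  have hwconv : ∀ s, (∫ τ in Ioi (0:ℝ), Real.exp (-β*τ) * w (s - τ)) = g s := by
    intro s
    have h1 : (fun τ => Real.exp (-β*τ) * w (s - τ))
        = fun τ => Real.exp (-β*τ) * f (s-τ) + α * (Real.exp (-β*τ) * g (s-τ)) := by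
      funext τ; rw [hw]; ring
    rw [h1, integral_add (myIntOn β hβ f hfc C hC s)
      ((myIntOn β hβ g hgcont (C/(β-α)) hgbd s).const_mul α),
      MeasureTheory.integral_const_mul, key s]
    field_simp
    ring
  -- the sup argument
  have hwpos : ∀ s, 0 ≤ w s := fun s => add_nonneg (hfpos s) (mul_nonneg hα.le (hgpos s))
  have hBdd : BddAbove (range fun s => u s - w s) := by
    refine ⟨Cu, ?_⟩
    rintro x ⟨s, rfl⟩
    have := (le_abs_self _).trans (hCu s)
    have := hwpos s
    simp only
    linarith
  set S : ℝ := ⨆ s, (u s - w s) with hS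
  have hSle : ∀ s, u s - w s ≤ S := fun s => le_ciSup hBdd s
  have hstep : ∀ s, u s - w s ≤ (α/β) * S := by
    intro s
    have h2 : ∀ τ ∈ Ioi (0:ℝ), Real.exp (-β*τ) * u (s - τ)
        ≤ S * Real.exp (-β*τ) + Real.exp (-β*τ) * w (s - τ) := by
      intro τ _
      have := hSle (s - τ)
      nlinarith [Real.exp_pos (-β*τ)]
    have h3 : (∫ τ in Ioi (0:ℝ), Real.exp (-β*τ) * u (s - τ))
        ≤ ∫ τ in Ioi (0:ℝ), (S * Real.exp (-β*τ) + Real.exp (-β*τ) * w (s - τ)) :=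
      setIntegral_mono_on (myIntOn β hβ u huc Cu hCu s)
        (((exp_neg_integrableOn_Ioi 0 hβ).const_mul S).add
          (myIntOn β hβ w hwcont _ hwbd s)) measurableSet_Ioi h2
    have h4 : (∫ τ in Ioi (0:ℝ), (S * Real.exp (-β*τ) + Real.exp (-β*τ) * w (s - τ)))
        = S * (1/β) + g s := by
      rw [integral_add ((exp_neg_integrableOn_Ioi 0 hβ).const_mul S)
        (myIntOn β hβ w hwcont _ hwbd s),
        MeasureTheory.integral_const_mul, myIntExp β hβ, hwconv s]
    have h5 := hineq s
    have : u s ≤ f s + α * (S * (1/β) + g s) := by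
      calc u s ≤ f s + α * ∫ τ in Ioi (0:ℝ), Real.exp (-β * τ) * u (s - τ) := h5
        _ ≤ f s + α * (S * (1/β) + g s) := by
            rw [← h4]
            have := h3
            nlinarith
    rw [hw]
    simp only
    have hαβ' : α * (S * (1/β)) = (α/β) * S := by ring
    nlinarith
  have hfinal : S ≤ (α/β) * S := ciSup_le hstep
  have hS0 : S ≤ 0 := by
    have h6 : α / β < 1 := (div_lt_one hβ).mpr hαβ
    nlinarith
  intro t
  constructor
  · -- u t ≤ f t + α * g t = w t
    have := hSle t
    have : u t ≤ w t := by linarith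
    rw [hw] at this
    exact this
  · -- f t + α * g t ≤ β/(β-α) * f t
    have h7 : α * g t ≤ α * (f t / (β - α)) :=
      mul_le_mul_of_nonneg_left (hgle t) hα.le
    have h8 : f t + α * (f t / (β - α)) = (β / (β - α)) * f t := by
      field_simp
      ring
    calc f t + α * g t ≤ f t + α * (f t / (β - α)) := by linarith
      _ = (β / (β - α)) * f t := h8
end

section
/- Let $X$ be a Banach space and $u : \mathbb{R} \to X$ bounded, and continuously differentiable with bounded uniformly continuous derivative. Then the Yosida approximation $(\partial_t)_\lambda u(t) = \frac{1}{\lambda}\left(u(t) - \frac{1}{\lambda}\int_0^\infty e^{-\tau/\lambda} u(t-\tau)\,d\tau\right)$ converges to $u'(t)$ uniformly in $t$ as $\lambda \to 0^+$. -/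
open MeasureTheory Set Filter

lemma aux_int1 (μ : ℝ) (hμ : 0 < μ) :
    IntegrableOn (fun τ => Real.exp (-τ / μ)) (Ioi (0:ℝ)) := by
  have := exp_neg_integrableOn_Ioi 0 (inv_pos.mpr hμ)
  refine this.congr_fun (fun τ _ => ?_) measurableSet_Ioi
  rw [neg_div, div_eq_inv_mul, ← neg_mul]

lemma aux_val1 (μ : ℝ) (hμ : 0 < μ) :
    ∫ τ in Ioi (0:ℝ), Real.exp (-τ / μ) = μ := by
  have hd : ∀ x ∈ Ici (0:ℝ), HasDerivAt (fun τ => -μ * Real.exp (-τ / μ))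
      (Real.exp (-x / μ)) x := by
    intro x _
    have h1 : HasDerivAt (fun τ : ℝ => -τ / μ) (-1 / μ) x := by
      simpa using ((hasDerivAt_id x).neg.div_const μ)
    have := (h1.exp.const_mul (-μ))
    refine this.congr_deriv ?_
    field_simp
  have htend : Tendsto (fun τ => -μ * Real.exp (-τ / μ)) atTop (nhds 0) := by
    have h2 : Tendsto (fun τ : ℝ => -τ / μ) atTop atBot := by
      apply Tendsto.atBot_div_const hμ
      exact tendsto_neg_atTop_atBot
    simpa using ((Real.tendsto_exp_atBot.comp h2).const_mul (-μ))
  have := integral_Ioi_of_hasDerivAt_of_tendsto' hd (aux_int1 μ hμ) htend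
  simp at this
  simpa using this

lemma aux_int2 (μ : ℝ) (hμ : 0 < μ) :
    IntegrableOn (fun τ => τ * Real.exp (-τ / μ)) (Ioi (0:ℝ)) := by
  have hd : ∀ x ∈ Ici (0:ℝ), HasDerivAt (fun τ => -((μ * τ + μ^2) * Real.exp (-τ / μ)))
      (x * Real.exp (-x / μ)) x := by
    intro x _
    have h1 : HasDerivAt (fun τ : ℝ => -τ / μ) (-1 / μ) x := by
      simpa using ((hasDerivAt_id x).neg.div_const μ)
    have h2 : HasDerivAt (fun τ : ℝ => μ * τ + μ^2) μ x := by
      simpa using ((hasDerivAt_id x).const_mul μ).add_const (μ^2)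
    have := (h2.mul h1.exp).neg
    refine this.congr_deriv ?_
    field_simp
    ring
  have htend : Tendsto (fun τ => -((μ * τ + μ^2) * Real.exp (-τ / μ))) atTop (nhds 0) := by
    have h3 : Tendsto (fun τ : ℝ => τ / μ) atTop atTop :=
      Tendsto.atTop_div_const hμ tendsto_id
    have h4 : Tendsto (fun x : ℝ => x * Real.exp (-x)) atTop (nhds 0) := by
      simpa using Real.tendsto_pow_mul_exp_neg_atTop_nhds_zero 1
    have h5 : Tendsto (fun τ : ℝ => (τ/μ) * Real.exp (-(τ/μ))) atTop (nhds 0) :=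
      h4.comp h3
    have h6 : Tendsto (fun τ : ℝ => Real.exp (-(τ/μ))) atTop (nhds 0) := by
      have hb : Tendsto (fun τ : ℝ => -τ/μ) atTop atBot :=
        Tendsto.atBot_div_const hμ tendsto_neg_atTop_atBot
      have h7 := Real.tendsto_exp_atBot.comp hb
      simp only [Function.comp_def, neg_div] at h7
      exact h7
    have := ((h5.const_mul (μ^2)).add (h6.const_mul (μ^2))).neg
    simp only [mul_zero, add_zero, neg_zero, zero_add, smul_eq_mul] at this ⊢
    refine Tendsto.congr (fun τ => ?_) this
    rw [neg_div]
    field_simp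
  exact integrableOn_Ioi_deriv_of_nonneg' hd
    (fun x hx => mul_nonneg (le_of_lt hx) (Real.exp_pos _).le) htend

lemma aux_val2 (μ : ℝ) (hμ : 0 < μ) :
    ∫ τ in Ioi (0:ℝ), τ * Real.exp (-τ / μ) = μ^2 := by
  have hd : ∀ x ∈ Ici (0:ℝ), HasDerivAt (fun τ => -((μ * τ + μ^2) * Real.exp (-τ / μ)))
      (x * Real.exp (-x / μ)) x := by
    intro x _
    have h1 : HasDerivAt (fun τ : ℝ => -τ / μ) (-1 / μ) x := by
      simpa using ((hasDerivAt_id x).neg.div_const μ)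
    have h2 : HasDerivAt (fun τ : ℝ => μ * τ + μ^2) μ x := by
      simpa using ((hasDerivAt_id x).const_mul μ).add_const (μ^2)
    have := (h2.mul h1.exp).neg
    refine this.congr_deriv ?_
    field_simp
    ring
  have htend : Tendsto (fun τ => -((μ * τ + μ^2) * Real.exp (-τ / μ))) atTop (nhds 0) := by
    have h3 : Tendsto (fun τ : ℝ => τ / μ) atTop atTop :=
      Tendsto.atTop_div_const hμ tendsto_id
    have h4 : Tendsto (fun x : ℝ => x * Real.exp (-x)) atTop (nhds 0) := by
      simpa using Real.tendsto_pow_mul_exp_neg_atTop_nhds_zero 1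
    have h5 : Tendsto (fun τ : ℝ => (τ/μ) * Real.exp (-(τ/μ))) atTop (nhds 0) :=
      h4.comp h3
    have h6 : Tendsto (fun τ : ℝ => Real.exp (-(τ/μ))) atTop (nhds 0) := by
      have hb : Tendsto (fun τ : ℝ => -τ/μ) atTop atBot :=
        Tendsto.atBot_div_const hμ tendsto_neg_atTop_atBot
      have h7 := Real.tendsto_exp_atBot.comp hb
      simp only [Function.comp_def, neg_div] at h7
      exact h7
    have := ((h5.const_mul (μ^2)).add (h6.const_mul (μ^2))).neg
    simp only [mul_zero, add_zero, neg_zero, zero_add, smul_eq_mul] at this ⊢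
    refine Tendsto.congr (fun τ => ?_) this
    rw [neg_div]
    field_simp
  have := integral_Ioi_of_hasDerivAt_of_tendsto' hd (aux_int2 μ hμ) htend
  simp at this
  simpa using this

theorem stmt6 (X : Type*) [NormedAddCommGroup X] [NormedSpace ℝ X] [CompleteSpace X]
    (u u' : ℝ → X) (hub : ∃ C, ∀ t, ‖u t‖ ≤ C)
    (hderiv : ∀ t, HasDerivAt u (u' t) t)
    (hu'c : UniformContinuous u') (hu'b : ∃ C, ∀ t, ‖u' t‖ ≤ C) :
    ∀ ε > (0:ℝ), ∃ lam₀ > (0:ℝ), ∀ lam : ℝ, 0 < lam → lam < lam₀ →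
      ∀ t : ℝ,
        ‖(1 / lam) • (u t - (1 / lam) • ∫ τ in Ioi (0:ℝ), Real.exp (-τ / lam) • u (t - τ))
          - u' t‖ ≤ ε := by
  obtain ⟨Cu, hCu⟩ := hub
  obtain ⟨C0, hC0⟩ := hu'b
  set C : ℝ := max C0 1 with hCdef
  have hC1 : (1:ℝ) ≤ C := le_max_right _ _
  have hCpos : (0:ℝ) < C := lt_of_lt_of_le one_pos hC1
  have hC' : ∀ s, ‖u' s‖ ≤ C := fun s => (hC0 s).trans (le_max_left _ _)
  have hucont : Continuous u :=
    continuous_iff_continuousAt.mpr fun s => (hderiv s).continuousAt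
  intro ε hε
  obtain ⟨δ', hδ'pos, hδ'⟩ := Metric.uniformContinuous_iff.mp hu'c (ε/4) (by positivity)
  set δ : ℝ := δ'/2 with hδdef
  have hδpos : 0 < δ := by positivity
  set K : ℝ := max (Real.log (16*C/ε)) 1 with hKdef
  have hKpos : 0 < K := lt_of_lt_of_le one_pos (le_max_right _ _)
  refine ⟨δ/(2*K), by positivity, ?_⟩
  intro lam hlam hlamlt t
  have hlamne : lam ≠ 0 := ne_of_gt hlam
  have h2lam : (0:ℝ) < 2*lam := by positivity
  set δl : ℝ := Real.exp (-δ/(2*lam)) with hδl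
  have hδlpos : 0 < δl := Real.exp_pos _
  -- integrability facts
  have hI0 : IntegrableOn (fun τ => Real.exp (-τ/lam)) (Ioi (0:ℝ)) := aux_int1 lam hlam
  have hIτ : IntegrableOn (fun τ => τ * Real.exp (-τ/lam)) (Ioi (0:ℝ)) := aux_int2 lam hlam
  have hIτ2 : IntegrableOn (fun τ => τ * Real.exp (-τ/(2*lam))) (Ioi (0:ℝ)) :=
    aux_int2 (2*lam) h2lam
  have hIu : Integrable (fun τ => Real.exp (-τ/lam) • u (t - τ))
      (volume.restrict (Ioi (0:ℝ))) := by
    refine Integrable.mono' (hI0.const_mul Cu) ?_ ?_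
    · exact (((Real.continuous_exp.comp (by continuity)).smul
        (hucont.comp (by continuity)))).aestronglyMeasurable
    · filter_upwards with τ
      rw [norm_smul, Real.norm_eq_abs, abs_of_pos (Real.exp_pos _)]
      calc Real.exp (-τ/lam) * ‖u (t - τ)‖ ≤ Real.exp (-τ/lam) * Cu :=
            mul_le_mul_of_nonneg_left (hCu _) (Real.exp_pos _).le
        _ = Cu * Real.exp (-τ/lam) := mul_comm _ _
  have hIdiff : Integrable (fun τ => Real.exp (-τ/lam) • (u t - u (t - τ)))
      (volume.restrict (Ioi (0:ℝ))) := by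
    have heq : (fun τ => Real.exp (-τ/lam) • (u t - u (t - τ)))
        = fun τ => Real.exp (-τ/lam) • u t - Real.exp (-τ/lam) • u (t - τ) :=
      funext fun τ => smul_sub _ _ _
    rw [heq]
    exact (hI0.smul_const (u t)).sub hIu
  have hImain : Integrable (fun τ => Real.exp (-τ/lam) • (u t - u (t - τ) - τ • u' t))
      (volume.restrict (Ioi (0:ℝ))) := by
    have heq : (fun τ => Real.exp (-τ/lam) • (u t - u (t - τ) - τ • u' t))
        = fun τ => Real.exp (-τ/lam) • (u t - u (t - τ)) - (τ * Real.exp (-τ/lam)) • u' t := by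
      funext τ; rw [smul_sub, smul_smul, mul_comm]
    rw [heq]
    exact hIdiff.sub (hIτ.smul_const _)
  -- the algebraic identity
  have hEeq : (1 / lam) • (u t - (1 / lam) • ∫ τ in Ioi (0:ℝ),
        Real.exp (-τ / lam) • u (t - τ)) - u' t
      = (1/lam^2) • ∫ τ in Ioi (0:ℝ), Real.exp (-τ/lam) • (u t - u (t - τ) - τ • u' t) := by
    have e1 : (∫ τ in Ioi (0:ℝ), Real.exp (-τ/lam) • (u t - u (t - τ) - τ • u' t))
        = ((lam • u t - ∫ τ in Ioi (0:ℝ), Real.exp (-τ/lam) • u (t - τ)) - (lam^2) • u' t) := by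
      have heq : (fun τ => Real.exp (-τ/lam) • (u t - u (t - τ) - τ • u' t))
          = fun τ => Real.exp (-τ/lam) • (u t - u (t - τ)) - (τ * Real.exp (-τ/lam)) • u' t := by
        funext τ; rw [smul_sub, smul_smul, mul_comm]
      rw [heq, integral_sub hIdiff (hIτ.smul_const _)]
      congr 1
      · have heq2 : (fun τ => Real.exp (-τ/lam) • (u t - u (t - τ)))
            = fun τ => Real.exp (-τ/lam) • u t - Real.exp (-τ/lam) • u (t - τ) :=
          funext fun τ => smul_sub _ _ _
        rw [heq2, integral_sub (hI0.smul_const _) hIu, integral_smul_const,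
          aux_val1 lam hlam]
      · rw [integral_smul_const, aux_val2 lam hlam]
    rw [e1]
    match_scalars <;> (field_simp; try ring)
  rw [hEeq]
  -- mean value bound
  have key : ∀ τ ∈ Ioi (0:ℝ), ‖u t - u (t - τ) - τ • u' t‖
      ≤ τ * (if τ ≤ δ then ε/4 else 2*C) := by
    intro τ hτ
    have hτ0 : (0:ℝ) < τ := hτ
    set B : ℝ := if τ ≤ δ then ε/4 else 2*C with hB
    have hder : ∀ σ ∈ Icc (0:ℝ) τ, HasDerivWithinAt (fun σ => u (t - σ) + σ • u' t)
        (u' t - u' (t - σ)) (Icc (0:ℝ) τ) σ := by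
      intro σ _
      have h1 : HasDerivAt (fun σ : ℝ => t - σ) (-1) σ := by
        simpa using (hasDerivAt_id σ).const_sub t
      have h2 : HasDerivAt (fun σ : ℝ => u (t - σ)) ((-1:ℝ) • u' (t - σ)) σ := by
        have := (hderiv (t - σ)).scomp (x := σ) h1
        simpa [Function.comp_def] using this
      have h3 : HasDerivAt (fun σ : ℝ => σ • u' t) ((1:ℝ) • u' t) σ :=
        (hasDerivAt_id σ).smul_const (u' t)
      have h4 := (h2.add h3).hasDerivWithinAt (s := Icc (0:ℝ) τ)
      convert h4 using 1
      · rfl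
      · rw [neg_one_smul, one_smul]; abel
    have hbound : ∀ σ ∈ Icc (0:ℝ) τ, ‖u' t - u' (t - σ)‖ ≤ B := by
      intro σ hσ
      by_cases hcase : τ ≤ δ
      · rw [hB, if_pos hcase]
        have hd : dist t (t - σ) < δ' := by
          rw [Real.dist_eq]
          have h5 : t - (t - σ) = σ := by ring
          rw [h5, abs_of_nonneg hσ.1]
          have : σ ≤ δ := le_trans hσ.2 hcase
          rw [hδdef] at this
          linarith
        have := hδ' hd
        rw [dist_eq_norm] at this
        exact this.le
      · rw [hB, if_neg hcase]
        calc ‖u' t - u' (t - σ)‖ ≤ ‖u' t‖ + ‖u' (t - σ)‖ := norm_sub_le _ _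
          _ ≤ C + C := add_le_add (hC' _) (hC' _)
          _ = 2*C := by ring
    have hmvt := (convex_Icc (0:ℝ) τ).norm_image_sub_le_of_norm_hasDerivWithin_le hder hbound
      (left_mem_Icc.mpr hτ0.le) (right_mem_Icc.mpr hτ0.le)
    simp only [sub_zero, zero_smul, add_zero] at hmvt
    have hnorm : ‖u (t - τ) + τ • u' t - u t‖ = ‖u t - u (t - τ) - τ • u' t‖ := by
      rw [← norm_neg]; congr 1; abel
    rw [hnorm, Real.norm_eq_abs, abs_of_pos hτ0] at hmvt
    calc ‖u t - u (t - τ) - τ • u' t‖ ≤ B * τ := hmvt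
      _ = τ * B := mul_comm _ _
  -- the dominating function
  set g : ℝ → ℝ := fun τ => (ε/4)*(τ*Real.exp (-τ/lam))
      + (2*C*δl)*(τ*Real.exp (-τ/(2*lam))) with hgdef
  have hIg : Integrable g (volume.restrict (Ioi (0:ℝ))) :=
    (hIτ.const_mul _).add (hIτ2.const_mul _)
  have hpt : ∀ᵐ τ ∂(volume.restrict (Ioi (0:ℝ))),
      ‖Real.exp (-τ/lam) • (u t - u (t - τ) - τ • u' t)‖ ≤ g τ := by
    filter_upwards [ae_restrict_mem measurableSet_Ioi] with τ hτ
    have hτ0 : (0:ℝ) < τ := hτ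
    rw [norm_smul, Real.norm_eq_abs, abs_of_pos (Real.exp_pos _)]
    have h1 := key τ hτ
    by_cases hcase : τ ≤ δ
    · rw [if_pos hcase] at h1
      have h2 : Real.exp (-τ/lam) * ‖u t - u (t - τ) - τ • u' t‖
          ≤ Real.exp (-τ/lam) * (τ * (ε/4)) :=
        mul_le_mul_of_nonneg_left h1 (Real.exp_pos _).le
      have hnn : 0 ≤ (2*C*δl)*(τ*Real.exp (-τ/(2*lam))) := by positivity
      calc Real.exp (-τ/lam) * ‖u t - u (t - τ) - τ • u' t‖
          ≤ Real.exp (-τ/lam) * (τ * (ε/4)) := h2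
        _ = (ε/4)*(τ*Real.exp (-τ/lam)) := by ring
        _ ≤ g τ := le_add_of_nonneg_right hnn
    · rw [if_neg hcase] at h1
      have hδτ : δ ≤ τ := (not_le.mp hcase).le
      have hsplit : Real.exp (-τ/lam) = Real.exp (-τ/(2*lam)) * Real.exp (-τ/(2*lam)) := by
        rw [← Real.exp_add]; congr 1; field_simp; ring
      have hmono : Real.exp (-τ/(2*lam)) ≤ δl := by
        rw [hδl]
        exact Real.exp_le_exp.mpr (by gcongr <;> linarith)
      have hτnn : (0:ℝ) ≤ τ := hτ0.le
      have hnn : 0 ≤ (ε/4)*(τ*Real.exp (-τ/lam)) := by positivity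
      calc Real.exp (-τ/lam) * ‖u t - u (t - τ) - τ • u' t‖
          ≤ Real.exp (-τ/lam) * (τ * (2*C)) :=
            mul_le_mul_of_nonneg_left h1 (Real.exp_pos _).le
        _ = (2*C)*τ*(Real.exp (-τ/(2*lam))*Real.exp (-τ/(2*lam))) := by
            rw [hsplit]; ring
        _ ≤ (2*C)*τ*(δl*Real.exp (-τ/(2*lam))) := by
            refine mul_le_mul_of_nonneg_left ?_ (by positivity)
            exact mul_le_mul_of_nonneg_right hmono (Real.exp_pos _).le
        _ = (2*C*δl)*(τ*Real.exp (-τ/(2*lam))) := by ring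
        _ ≤ g τ := le_add_of_nonneg_left hnn
  -- conclude
  calc ‖(1/lam^2) • ∫ τ in Ioi (0:ℝ), Real.exp (-τ/lam) • (u t - u (t - τ) - τ • u' t)‖
      = (1/lam^2) * ‖∫ τ in Ioi (0:ℝ), Real.exp (-τ/lam) • (u t - u (t - τ) - τ • u' t)‖ := by
        rw [norm_smul, Real.norm_eq_abs, abs_of_pos (by positivity)]
    _ ≤ (1/lam^2) * ∫ τ in Ioi (0:ℝ), g τ :=
        mul_le_mul_of_nonneg_left (norm_integral_le_of_norm_le hIg hpt) (by positivity)
    _ = ε/4 + 8*C*δl := by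
        rw [hgdef]
        rw [integral_add (hIτ.const_mul _) (hIτ2.const_mul _),
          integral_const_mul, integral_const_mul, aux_val2 lam hlam, aux_val2 (2*lam) h2lam]
        field_simp
        ring
    _ ≤ ε/4 + ε/2 := by
        have hKlam : K < δ/(2*lam) := by
          rw [lt_div_iff₀ h2lam]
          have h6 := (lt_div_iff₀ (by positivity : (0:ℝ) < 2*K)).mp hlamlt
          nlinarith
        have hlog : Real.log (16*C/ε) ≤ K := le_max_left _ _
        have hexp : δl < ε/(16*C) := by
          rw [hδl, neg_div]
          have h7 : Real.exp (-(δ/(2*lam))) < Real.exp (-(Real.log (16*C/ε))) :=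
            Real.exp_lt_exp.mpr (by linarith)
          have h8 : Real.exp (-(Real.log (16*C/ε))) = ε/(16*C) := by
            rw [Real.exp_neg, Real.exp_log (by positivity), inv_div]
          rw [h8] at h7
          exact h7
        have h9 : 8*C*(ε/(16*C)) = ε/2 := by field_simp; ring
        have h10 := mul_lt_mul_of_pos_left hexp (by positivity : (0:ℝ) < 8*C)
        linarith
    _ ≤ ε := by linarith
end

section
/- Let $X$ be a Banach space, $\omega < 0$, $0 < \lambda$ with $1-\lambda\omega > 0$, and $K_0 > 0$. Let $\psi, \phi \in BUC(\mathbb{R},X)$ and suppose $v, w \in BUC(\mathbb{R},X)$ satisfy, for all $t$: $\|v(t)-w(t)\| \leq \frac{1}{\lambda(1-\lambda\omega)}\int_0^\infty e^{-\tau/\lambda}\|v(t-\tau)-w(t-\tau)\|\,d\tau + \frac{\lambda K_0}{1-\lambda\omega}\sup_{x\leq t}\|\psi(x)-\phi(x)\|$. Then for all $t$: $\|v(t)-w(t)\| \leq \frac{\lambda K_0}{1-\lambda\omega}\sup_{x\leq t}\|\psi(x)-\phi(x)\| + \frac{K_0}{1-\lambda\omega}\int_0^\infty \exp\left(\frac{\omega\tau}{1-\lambda\omega}\right)\sup_{x\leq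 t-\tau}\|\psi(x)-\phi(x)\|\,d\tau$. -/
open MeasureTheory Set

lemma exp_tendsto_zero (b : ℝ) (hb : 0 < b) :
    Filter.Tendsto (fun x : ℝ => Real.exp (-b * x)) Filter.atTop (nhds 0) := by
  apply Real.tendsto_exp_atBot.comp
  have : Filter.Tendsto (fun x : ℝ => b * x) Filter.atTop Filter.atTop :=
    Filter.Tendsto.const_mul_atTop hb Filter.tendsto_id
  have h2 := Filter.tendsto_neg_atBot_iff.mpr this
  simpa [neg_mul] using h2.congr (fun x => by ring)

lemma exp_deriv_aux (b : ℝ) (x : ℝ) (hb : b ≠ 0) :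
    HasDerivAt (fun x => -Real.exp (-b * x) / b) (Real.exp (-b * x)) x := by
  have h1 : HasDerivAt (fun x : ℝ => -b * x) (-b) x := by
    simpa using (hasDerivAt_id x).const_mul (-b)
  have h2 : HasDerivAt (fun x : ℝ => Real.exp (-b * x)) (Real.exp (-b * x) * (-b)) x :=
    (Real.hasDerivAt_exp (-b * x)).comp x h1
  have h3 := (h2.neg).div_const b
  rw [mul_neg, neg_neg, mul_div_assoc, div_self hb, mul_one] at h3
  exact h3

lemma exp_int_Ioi (b : ℝ) (hb : 0 < b) : ∫ x in Ioi (0:ℝ), Real.exp (-b * x) = 1 / b := by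
  have h := integral_Ioi_of_hasDerivAt_of_tendsto (f := fun x => -Real.exp (-b * x) / b)
      (f' := fun x => Real.exp (-b * x)) (a := 0) (m := 0)
      (Continuous.continuousWithinAt (by continuity))
      (fun x _ => exp_deriv_aux b x hb.ne')
      (exp_neg_integrableOn_Ioi 0 hb)
      (by simpa using (exp_tendsto_zero b hb).neg.div_const b)
  rw [h]; simp; ring

lemma exp_int_interval (a ρ : ℝ) (ha : 0 < a) :
    ∫ τ in (0:ℝ)..ρ, Real.exp (-a * τ) = (1 - Real.exp (-a * ρ)) / a := by
  rw [intervalIntegral.integral_eq_sub_of_hasDerivAt (fun x _ => exp_deriv_aux a x ha.ne')]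
  · simp; ring
  · apply Continuous.intervalIntegrable; continuity

lemma shift_int (h : ℝ → ℝ) (τ : ℝ) :
    ∫ σ in Ioi (0:ℝ), h σ = ∫ ρ in Ioi τ, h (ρ - τ) := by
  rw [← integral_indicator measurableSet_Ioi, ← integral_indicator measurableSet_Ioi,
    ← integral_sub_right_eq_self (fun x => (Ioi (0:ℝ)).indicator h x) τ]
  congr 1
  funext ρ
  by_cases hm : τ < ρ
  · rw [indicator_of_mem (by simpa using hm), indicator_of_mem (by simp [sub_pos, hm])]
  · rw [indicator_of_notMem (by simpa using hm), indicator_of_notMem (by simp [sub_pos]; simpa using hm)]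

lemma int_exp_mul (δ H : ℝ) (hδ : 0 < δ) (h : ℝ → ℝ)
    (hm : AEStronglyMeasurable h (volume.restrict (Ioi 0)))
    (hb : ∀ x, |h x| ≤ H) :
    IntegrableOn (fun τ => Real.exp (-δ * τ) * h τ) (Ioi (0:ℝ)) := by
  apply Integrable.mono' ((exp_neg_integrableOn_Ioi 0 hδ).const_mul H)
  · exact (Real.continuous_exp.comp (continuous_const.mul continuous_id)).aestronglyMeasurable.mul hm
  · filter_upwards with x
    rw [norm_mul, Real.norm_eq_abs, Real.norm_eq_abs, abs_of_pos (Real.exp_pos _)]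
    calc Real.exp (-δ * x) * |h x| ≤ Real.exp (-δ * x) * H :=
          mul_le_mul_of_nonneg_left (hb x) (Real.exp_pos _).le
      _ = H * Real.exp (-δ * x) := mul_comm _ _

lemma fubini_key (α β γ : ℝ) (hβ : 0 < β) (hα : 0 < α) (hαβγ : α = β + γ) (hγ : γ < 0)
    (g : ℝ → ℝ) (hgm : Measurable g) (hg0 : ∀ x, 0 ≤ g x) (G : ℝ) (hgG : ∀ x, g x ≤ G) (t : ℝ) :
    ∫ τ in Ioi (0:ℝ), Real.exp (-β*τ) * (∫ σ in Ioi (0:ℝ), Real.exp (γ*σ) * g (t-τ-σ))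
      = ∫ ρ in Ioi (0:ℝ), ((Real.exp (γ*ρ) - Real.exp (-β*ρ))/α) * g (t-ρ) := by
  set S : Set (ℝ×ℝ) := {q : ℝ×ℝ | 0 < q.1 ∧ q.1 < q.2} with hS
  have hSmeas : MeasurableSet S :=
    (measurableSet_lt measurable_const measurable_fst).inter
      (measurableSet_lt measurable_fst measurable_snd)
  set F : ℝ×ℝ → ℝ := S.indicator (fun q => Real.exp (-β*q.1 + γ*(q.2-q.1)) * g (t-q.2)) with hF
  have hFmeas : Measurable F := by
    apply Measurable.indicator _ hSmeas
    exact (Real.measurable_exp.comp ((measurable_fst.const_mul (-β)).add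
      ((measurable_snd.sub measurable_fst).const_mul γ))).mul
      (hgm.comp (measurable_const.sub measurable_snd))
  -- Step B : integrability of F
  have hγ' : (0:ℝ) < -γ := by linarith
  have hexpγ : IntegrableOn (fun x : ℝ => Real.exp (γ*x)) (Ioi (0:ℝ)) := by
    have := exp_neg_integrableOn_Ioi (0:ℝ) hγ'
    simpa using this
  have hFint : Integrable F (volume.prod volume) := by
    apply Integrable.mono' (g := fun p : ℝ×ℝ =>
      ((Ioi (0:ℝ)).indicator (fun x => Real.exp (-α*x)) p.1) *
      ((Ioi (0:ℝ)).indicator (fun x => G * Real.exp (γ*x)) p.2))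
    · exact Integrable.mul_prod
        ((integrable_indicator_iff measurableSet_Ioi).2 (exp_neg_integrableOn_Ioi 0 hα))
        ((integrable_indicator_iff measurableSet_Ioi).2 (hexpγ.const_mul G))
    · exact hFmeas.aestronglyMeasurable
    · filter_upwards with p
      by_cases hp : p ∈ S
      · obtain ⟨hp1, hp2⟩ := id hp
        rw [hF, indicator_of_mem hp, indicator_of_mem (show p.1 ∈ Ioi (0:ℝ) from hp1),
          indicator_of_mem (show p.2 ∈ Ioi (0:ℝ) from hp1.trans hp2)]
        rw [Real.norm_eq_abs, abs_of_nonneg (mul_nonneg (Real.exp_pos _).le (hg0 _))]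
        have he : Real.exp (-β*p.1 + γ*(p.2-p.1)) = Real.exp (-α*p.1) * Real.exp (γ*p.2) := by
          rw [← Real.exp_add]; congr 1; rw [hαβγ]; ring
        rw [he]
        calc Real.exp (-α*p.1) * Real.exp (γ*p.2) * g (t-p.2)
            ≤ Real.exp (-α*p.1) * Real.exp (γ*p.2) * G := by
              apply mul_le_mul_of_nonneg_left (hgG _)
              positivity
          _ = Real.exp (-α*p.1) * (G * Real.exp (γ*p.2)) := by ring
      · rw [hF, indicator_of_notMem hp]
        simp only [norm_zero]
        have hG0 : (0:ℝ) ≤ G := (hg0 0).trans (hgG 0)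
        apply mul_nonneg
        · apply indicator_nonneg; intro x _; positivity
        · apply indicator_nonneg; intro x _; exact mul_nonneg hG0 (Real.exp_pos _).le
  -- Step A : LHS as iterated whole-line integral
  have hinner1 : ∀ τ : ℝ, (Ioi (0:ℝ)).indicator
      (fun τ => Real.exp (-β*τ) * (∫ σ in Ioi (0:ℝ), Real.exp (γ*σ) * g (t-τ-σ))) τ
      = ∫ ρ, F (τ, ρ) := by
    intro τ
    by_cases hτ : (0:ℝ) < τ
    · rw [indicator_of_mem (show τ ∈ Ioi (0:ℝ) from hτ)]
      have h1 : (∫ σ in Ioi (0:ℝ), Real.exp (γ*σ) * g (t-τ-σ))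
          = ∫ ρ in Ioi τ, Real.exp (γ*(ρ-τ)) * g (t-ρ) := by
        rw [shift_int (fun σ => Real.exp (γ*σ) * g (t-τ-σ)) τ]
        congr 1; funext ρ
        have : t - τ - (ρ - τ) = t - ρ := by ring
        rw [this]
      rw [h1, ← integral_const_mul, ← integral_indicator measurableSet_Ioi]
      congr 1
      funext ρ
      by_cases hρ : τ < ρ
      · rw [indicator_of_mem (show ρ ∈ Ioi τ from hρ),
          hF, indicator_of_mem (show (τ,ρ) ∈ S from ⟨hτ, hρ⟩)]
        rw [Real.exp_add]; ring
      · rw [indicator_of_notMem (by simpa using hρ),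
          hF, indicator_of_notMem (by simp [hS]; intro _; simpa using hρ)]
    · rw [indicator_of_notMem (by simpa using hτ)]
      have : ∀ ρ, F (τ, ρ) = 0 := by
        intro ρ
        rw [hF, indicator_of_notMem]
        simp [hS]
        intro h; exact absurd h hτ
      simp [this]
  have hLHS : (∫ τ in Ioi (0:ℝ), Real.exp (-β*τ) * (∫ σ in Ioi (0:ℝ), Real.exp (γ*σ) * g (t-τ-σ)))
      = ∫ τ, ∫ ρ, F (τ, ρ) := by
    rw [← integral_indicator measurableSet_Ioi]
    congr 1
    funext τ
    exact hinner1 τ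
  -- Step C : swap
  have hswap : (∫ τ, ∫ ρ, F (τ, ρ)) = ∫ ρ, ∫ τ, F (τ, ρ) := by
    apply integral_integral_swap
    exact hFint
  -- Step D : inner integral computation
  have hinner2 : ∀ ρ : ℝ, (∫ τ, F (τ, ρ))
      = (Ioi (0:ℝ)).indicator (fun ρ => ((Real.exp (γ*ρ) - Real.exp (-β*ρ))/α) * g (t-ρ)) ρ := by
    intro ρ
    by_cases hρ : (0:ℝ) < ρ
    · rw [indicator_of_mem (show ρ ∈ Ioi (0:ℝ) from hρ)]
      have hFτ : ∀ τ : ℝ, F (τ, ρ)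
          = (Ioo (0:ℝ) ρ).indicator (fun τ => (Real.exp (γ*ρ) * g (t-ρ)) * Real.exp (-α*τ)) τ := by
        intro τ
        by_cases hτ : τ ∈ Ioo (0:ℝ) ρ
        · rw [indicator_of_mem hτ, hF, indicator_of_mem (show (τ,ρ) ∈ S from ⟨hτ.1, hτ.2⟩)]
          have he : Real.exp (-β*τ + γ*(ρ-τ)) = Real.exp (γ*ρ) * Real.exp (-α*τ) := by
            rw [← Real.exp_add]; congr 1; rw [hαβγ]; ring
          rw [he]; ring
        · rw [indicator_of_notMem hτ, hF, indicator_of_notMem]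
          simp only [hS, mem_setOf_eq, not_and]
          intro h1 h2
          exact hτ ⟨h1, h2⟩
      have : (∫ τ, F (τ, ρ)) = ∫ τ in Ioo (0:ℝ) ρ, (Real.exp (γ*ρ) * g (t-ρ)) * Real.exp (-α*τ) := by
        rw [← integral_indicator measurableSet_Ioo]
        congr 1; funext τ; exact hFτ τ
      rw [this, integral_const_mul, ← integral_Ioc_eq_integral_Ioo,
        ← intervalIntegral.integral_of_le hρ.le, exp_int_interval α ρ hα]
      have he2 : Real.exp (γ*ρ) * Real.exp (-α*ρ) = Real.exp (-β*ρ) := by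
        rw [← Real.exp_add]; congr 1; rw [hαβγ]; ring
      rw [← he2]; ring
    · rw [indicator_of_notMem (by simpa using hρ)]
      have : ∀ τ, F (τ, ρ) = 0 := by
        intro τ
        rw [hF, indicator_of_notMem]
        simp only [hS, mem_setOf_eq, not_and]
        intro h1 h2
        exact absurd (h1.trans h2) hρ
      simp [this]
  rw [hLHS, hswap]
  rw [← integral_indicator measurableSet_Ioi]
  congr 1
  funext ρ
  exact hinner2 ρ

theorem stmt16 (X : Type*) [NormedAddCommGroup X] [NormedSpace ℝ X] [CompleteSpace X]
    (ω lam K₀ : ℝ) (hω : ω < 0) (hlam : 0 < lam) (hpos : 0 < 1 - lam * ω) (hK₀ : 0 < K₀)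
    (ψ φ v w : ℝ → X)
    (hψ : UniformContinuous ψ ∧ ∃ C, ∀ t, ‖ψ t‖ ≤ C)
    (hφ : UniformContinuous φ ∧ ∃ C, ∀ t, ‖φ t‖ ≤ C)
    (hv : UniformContinuous v ∧ ∃ C, ∀ t, ‖v t‖ ≤ C)
    (hw : UniformContinuous w ∧ ∃ C, ∀ t, ‖w t‖ ≤ C)
    (hineq : ∀ t : ℝ, ‖v t - w t‖
        ≤ (1 / (lam * (1 - lam * ω))) *
            (∫ τ in Ioi (0:ℝ), Real.exp (-τ / lam) * ‖v (t - τ) - w (t - τ)‖)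
          + (lam * K₀ / (1 - lam * ω)) * ⨆ x : {x : ℝ // x ≤ t}, ‖ψ x.1 - φ x.1‖) :
    ∀ t : ℝ, ‖v t - w t‖
        ≤ (lam * K₀ / (1 - lam * ω)) * (⨆ x : {x : ℝ // x ≤ t}, ‖ψ x.1 - φ x.1‖)
          + (K₀ / (1 - lam * ω)) *
            ∫ τ in Ioi (0:ℝ), Real.exp (ω * τ / (1 - lam * ω)) *
              ⨆ x : {x : ℝ // x ≤ t - τ}, ‖ψ x.1 - φ x.1‖ := by
  obtain ⟨hψc, Cψ, hψb⟩ := hψ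
  obtain ⟨hφc, Cφ, hφb⟩ := hφ
  obtain ⟨hvc, Cv, hvb⟩ := hv
  obtain ⟨hwc, Cw, hwb⟩ := hw
  -- constants
  set α : ℝ := 1 / (lam * (1 - lam * ω)) with hα_def
  set β : ℝ := 1 / lam with hβ_def
  set γ : ℝ := ω / (1 - lam * ω) with hγ_def
  set c : ℝ := lam * K₀ / (1 - lam * ω) with hc_def
  set C : ℝ := K₀ / (1 - lam * ω) with hC_def
  have h1 : (1:ℝ) ≤ 1 - lam * ω := by nlinarith
  have hαpos : 0 < α := by rw [hα_def]; positivity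
  have hβpos : 0 < β := by rw [hβ_def]; positivity
  have hγneg : γ < 0 := div_neg_of_neg_of_pos hω hpos
  have hαβγ : α = β + γ := by
    rw [hα_def, hβ_def, hγ_def]; field_simp; ring
  have hcpos : 0 < c := by rw [hc_def]; positivity
  have hCpos : 0 < C := by rw [hC_def]; positivity
  have hαc : α * c ≤ C := by
    rw [hα_def, hc_def, hC_def]
    rw [div_mul_div_comm, one_mul]
    rw [div_le_div_iff₀ (by positivity) hpos]
    have expand : K₀ * (lam * (1 - lam*ω) * (1-lam*ω)) - lam*K₀*(1-lam*ω)
        = lam*K₀*(1-lam*ω)*((1-lam*ω)-1) := by ring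
    nlinarith [mul_nonneg (mul_nonneg (mul_pos hlam hK₀).le hpos.le)
      (by linarith : (0:ℝ) ≤ (1 - lam*ω) - 1)]
  have hq : α * (1/β) = 1 / (1 - lam * ω) := by
    rw [hα_def, hβ_def]; field_simp
  set q : ℝ := 1 / (1 - lam * ω) with hq_def
  have hqpos : 0 < q := by rw [hq_def]; positivity
  have hqlt : q < 1 := by
    rw [hq_def]
    rw [div_lt_one hpos]; nlinarith
  -- the function g
  set g : ℝ → ℝ := fun s => ⨆ x : {x : ℝ // x ≤ s}, ‖ψ x.1 - φ x.1‖ with hg_def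
  set G : ℝ := Cψ + Cφ with hG_def
  have hbdd : ∀ s : ℝ, BddAbove (Set.range fun x : {x : ℝ // x ≤ s} => ‖ψ x.1 - φ x.1‖) := by
    intro s
    refine ⟨G, ?_⟩
    rintro y ⟨x, rfl⟩
    exact (norm_sub_le _ _).trans (add_le_add (hψb _) (hφb _))
  have hgG : ∀ s, g s ≤ G := by
    intro s
    haveI : Nonempty {x : ℝ // x ≤ s} := ⟨⟨s, le_refl s⟩⟩
    exact ciSup_le fun x => (norm_sub_le _ _).trans (add_le_add (hψb _) (hφb _))
  have hg0 : ∀ s, 0 ≤ g s := fun s =>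
    (norm_nonneg (ψ s - φ s)).trans (le_ciSup (hbdd s) ⟨s, le_refl s⟩)
  have hG0 : 0 ≤ G := (hg0 0).trans (hgG 0)
  have hgmono : Monotone g := by
    intro s s' hss
    haveI : Nonempty {x : ℝ // x ≤ s} := ⟨⟨s, le_refl s⟩⟩
    exact ciSup_le fun x => le_ciSup (hbdd s') (⟨x.1, le_trans x.2 hss⟩ : {x : ℝ // x ≤ s'})
  have hgmeas : Measurable g := hgmono.measurable
  -- the function u
  set u : ℝ → ℝ := fun s => ‖v s - w s‖ with hu_def
  have hucont : Continuous u := (hvc.continuous.sub hwc.continuous).norm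
  set M : ℝ := Cv + Cw with hM_def
  have huM : ∀ s, u s ≤ M := fun s => (norm_sub_le _ _).trans (add_le_add (hvb _) (hwb _))
  have hu0 : ∀ s, 0 ≤ u s := fun s => norm_nonneg _
  -- the function I
  set I : ℝ → ℝ := fun s => ∫ σ in Ioi (0:ℝ), Real.exp (γ*σ) * g (s-σ) with hI_def
  have hγ' : (0:ℝ) < -γ := by linarith
  have hIint : ∀ s : ℝ, IntegrableOn (fun σ => Real.exp (γ*σ) * g (s-σ)) (Ioi 0) := by
    intro s
    have := int_exp_mul (-γ) G hγ' (fun σ => g (s-σ))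
      ((hgmeas.comp (measurable_const.sub measurable_id)).aestronglyMeasurable)
      (fun x => by rw [abs_of_nonneg (hg0 _)]; exact hgG _)
    simpa using this
  have hImono : Monotone I := by
    intro s s' hss
    exact integral_mono (hIint s) (hIint s')
      (fun σ => mul_le_mul_of_nonneg_left (hgmono (by linarith : s - σ ≤ s' - σ)) (Real.exp_pos _).le)
  have hImeas : Measurable I := hImono.measurable
  have hI0 : ∀ s, 0 ≤ I s := fun s =>
    setIntegral_nonneg measurableSet_Ioi (fun σ _ => mul_nonneg (Real.exp_pos _).le (hg0 _))
  set BI : ℝ := G * (1/(-γ)) with hBI_def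
  have hIBI : ∀ s, I s ≤ BI := by
    intro s
    have hGi : IntegrableOn (fun σ : ℝ => Real.exp (γ*σ) * G) (Ioi 0) := by
      have := (exp_neg_integrableOn_Ioi (0:ℝ) hγ').mul_const G
      simpa [IntegrableOn] using this
    calc I s ≤ ∫ σ in Ioi (0:ℝ), Real.exp (γ*σ) * G :=
          integral_mono (hIint s) hGi
            (fun σ => mul_le_mul_of_nonneg_left (hgG _) (Real.exp_pos _).le)
      _ = (∫ σ in Ioi (0:ℝ), Real.exp (-(-γ)*σ)) * G := by
          rw [← integral_mul_const]; congr 1; funext σ; rw [neg_neg]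
      _ = BI := by rw [exp_int_Ioi (-γ) hγ', hBI_def]; ring
  -- the constant A
  set A : ℝ := ⨆ s : ℝ, (u s - c * g s - C * I s) with hA_def
  have hAbdd : BddAbove (Set.range fun s : ℝ => u s - c * g s - C * I s) := by
    refine ⟨M, ?_⟩
    rintro y ⟨s, rfl⟩
    have h2 := mul_nonneg hcpos.le (hg0 s)
    have h3 := mul_nonneg hCpos.le (hI0 s)
    have := huM s
    simp only
    linarith
  have hAle : ∀ s, u s - c * g s - C * I s ≤ A := fun s => le_ciSup hAbdd s
  -- integrability facts
  have huint : ∀ s : ℝ, IntegrableOn (fun τ => Real.exp (-β*τ) * u (s-τ)) (Ioi 0) :=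
    fun s => int_exp_mul β M hβpos (fun τ => u (s-τ))
      ((hucont.comp (continuous_const.sub continuous_id)).aestronglyMeasurable)
      (fun x => by rw [abs_of_nonneg (hu0 _)]; exact huM _)
  have hT1int : ∀ s : ℝ, IntegrableOn (fun τ => Real.exp (-β*τ) * g (s-τ)) (Ioi 0) :=
    fun s => int_exp_mul β G hβpos (fun τ => g (s-τ))
      ((hgmeas.comp (measurable_const.sub measurable_id)).aestronglyMeasurable)
      (fun x => by rw [abs_of_nonneg (hg0 _)]; exact hgG _)
  have hT2int : ∀ s : ℝ, IntegrableOn (fun τ => Real.exp (-β*τ) * I (s-τ)) (Ioi 0) :=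
    fun s => int_exp_mul β BI hβpos (fun τ => I (s-τ))
      ((hImeas.comp (measurable_const.sub measurable_id)).aestronglyMeasurable)
      (fun x => by rw [abs_of_nonneg (hI0 _)]; exact hIBI _)
  have hexpint : IntegrableOn (fun τ : ℝ => Real.exp (-β*τ)) (Ioi 0) :=
    exp_neg_integrableOn_Ioi 0 hβpos
  -- key estimate
  have key : ∀ s : ℝ, u s ≤ c * g s + C * I s + q * A := by
    intro s
    have h0 := hineq s
    have hconv : (∫ τ in Ioi (0:ℝ), Real.exp (-τ/lam) * ‖v (s-τ) - w (s-τ)‖)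
        = ∫ τ in Ioi (0:ℝ), Real.exp (-β*τ) * u (s-τ) := by
      congr 1
      funext τ
      rw [show -τ/lam = -β*τ by rw [hβ_def]; ring]
    rw [hconv] at h0
    -- h0 : u s ≤ α * (∫ τ in Ioi 0, exp(-β τ) u (s-τ)) + c * g s
    have step1 : (∫ τ in Ioi (0:ℝ), Real.exp (-β*τ) * u (s-τ))
        ≤ ∫ τ in Ioi (0:ℝ), Real.exp (-β*τ) * (c * g (s-τ) + C * I (s-τ) + A) := by
      apply integral_mono (huint s)
      · have e1 : (fun τ => Real.exp (-β*τ) * (c * g (s-τ) + C * I (s-τ) + A))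
            = fun τ => c * (Real.exp (-β*τ) * g (s-τ))
              + (C * (Real.exp (-β*τ) * I (s-τ)) + A * Real.exp (-β*τ)) := by
          funext τ; ring
        rw [e1]
        exact ((hT1int s).const_mul c).add (((hT2int s).const_mul C).add (hexpint.const_mul A))
      · intro τ
        have := hAle (s-τ)
        have h2 : u (s-τ) ≤ c * g (s-τ) + C * I (s-τ) + A := by linarith
        exact mul_le_mul_of_nonneg_left h2 (Real.exp_pos _).le
    have hsplit : (∫ τ in Ioi (0:ℝ), Real.exp (-β*τ) * (c * g (s-τ) + C * I (s-τ) + A))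
        = c * (∫ τ in Ioi (0:ℝ), Real.exp (-β*τ) * g (s-τ))
          + C * (∫ τ in Ioi (0:ℝ), Real.exp (-β*τ) * I (s-τ)) + A * (1/β) := by
      have e1 : (fun τ => Real.exp (-β*τ) * (c * g (s-τ) + C * I (s-τ) + A))
          = fun τ => c * (Real.exp (-β*τ) * g (s-τ))
            + (C * (Real.exp (-β*τ) * I (s-τ)) + A * Real.exp (-β*τ)) := by
        funext τ; ring
      have h23 : IntegrableOn (fun τ => C * (Real.exp (-β*τ) * I (s-τ)) + A * Real.exp (-β*τ))
          (Ioi (0:ℝ)) := ((hT2int s).const_mul C).add (hexpint.const_mul A)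
      rw [e1, integral_add ((hT1int s).const_mul c) h23,
        integral_add ((hT2int s).const_mul C) (hexpint.const_mul A),
        integral_const_mul, integral_const_mul, integral_const_mul, exp_int_Ioi β hβpos]
      ring
    -- Fubini for the T2 term
    have hT2eq : (∫ τ in Ioi (0:ℝ), Real.exp (-β*τ) * I (s-τ))
        = ∫ ρ in Ioi (0:ℝ), ((Real.exp (γ*ρ) - Real.exp (-β*ρ))/α) * g (s-ρ) :=
      fubini_key α β γ hβpos hαpos hαβγ hγneg g hgmeas hg0 G hgG s
    -- combination estimate
    have hT3int : IntegrableOn (fun ρ => ((Real.exp (γ*ρ) - Real.exp (-β*ρ))/α) * g (s-ρ)) (Ioi 0) := by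
      have e1 : (fun ρ => ((Real.exp (γ*ρ) - Real.exp (-β*ρ))/α) * g (s-ρ))
          = fun ρ => (1/α) * (Real.exp (γ*ρ) * g (s-ρ)) - (1/α) * (Real.exp (-β*ρ) * g (s-ρ)) := by
        funext ρ; field_simp
      rw [e1]
      exact (((hIint s).const_mul (1/α)).sub ((hT1int s).const_mul (1/α)))
    have hcomb : α * c * (∫ τ in Ioi (0:ℝ), Real.exp (-β*τ) * g (s-τ))
        + α * C * (∫ ρ in Ioi (0:ℝ), ((Real.exp (γ*ρ) - Real.exp (-β*ρ))/α) * g (s-ρ))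
        ≤ C * I s := by
      rw [← integral_const_mul, ← integral_const_mul]
      have hsum : (∫ τ in Ioi (0:ℝ), α * c * (Real.exp (-β*τ) * g (s-τ)))
          + (∫ ρ in Ioi (0:ℝ), α * C * (((Real.exp (γ*ρ) - Real.exp (-β*ρ))/α) * g (s-ρ)))
          = ∫ ρ in Ioi (0:ℝ), (α * c * (Real.exp (-β*ρ) * g (s-ρ))
              + α * C * (((Real.exp (γ*ρ) - Real.exp (-β*ρ))/α) * g (s-ρ))) :=
        (integral_add ((hT1int s).const_mul (α*c)) (hT3int.const_mul (α*C))).symm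
      rw [hsum]
      have : C * I s = ∫ ρ in Ioi (0:ℝ), C * (Real.exp (γ*ρ) * g (s-ρ)) := by
        rw [integral_const_mul]
      rw [this]
      apply integral_mono (((hT1int s).const_mul (α*c)).add (hT3int.const_mul (α*C)))
        ((hIint s).const_mul C)
      intro ρ
      simp only [Pi.add_apply]
      have he : α * C * (((Real.exp (γ*ρ) - Real.exp (-β*ρ))/α) * g (s-ρ))
          = C * (Real.exp (γ*ρ) * g (s-ρ)) - C * (Real.exp (-β*ρ) * g (s-ρ)) := by
        field_simp
      have h4 : α * c * (Real.exp (-β*ρ) * g (s-ρ)) ≤ C * (Real.exp (-β*ρ) * g (s-ρ)) :=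
        mul_le_mul_of_nonneg_right hαc (mul_nonneg (Real.exp_pos _).le (hg0 _))
      linarith [he, h4]
    calc u s ≤ α * (∫ τ in Ioi (0:ℝ), Real.exp (-β*τ) * u (s-τ)) + c * g s := h0
      _ ≤ α * (c * (∫ τ in Ioi (0:ℝ), Real.exp (-β*τ) * g (s-τ))
            + C * (∫ τ in Ioi (0:ℝ), Real.exp (-β*τ) * I (s-τ)) + A * (1/β)) + c * g s := by
          have h5 := step1.trans_eq hsplit
          exact add_le_add_left (mul_le_mul_of_nonneg_left h5 hαpos.le) _
      _ = α * c * (∫ τ in Ioi (0:ℝ), Real.exp (-β*τ) * g (s-τ))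
            + α * C * (∫ ρ in Ioi (0:ℝ), ((Real.exp (γ*ρ) - Real.exp (-β*ρ))/α) * g (s-ρ))
            + (α * (1/β)) * A + c * g s := by
          rw [← hT2eq]; ring
      _ ≤ C * I s + q * A + c * g s := by
          rw [hq]
          linarith [hcomb]
      _ = c * g s + C * I s + q * A := by ring
  -- conclude A ≤ 0
  have hAq : A ≤ q * A := by
    nth_rewrite 1 [hA_def]
    apply ciSup_le
    intro s
    have := key s
    linarith
  have hA0 : A ≤ 0 := by
    by_contra hA
    push_neg at hA
    have h6 : q * A < 1 * A := mul_lt_mul_of_pos_right hqlt hA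
    linarith
  -- finish
  intro t
  have hfin : u t ≤ c * g t + C * I t := by
    have hqA : q * A ≤ 0 := by nlinarith [mul_nonneg hqpos.le (neg_nonneg.mpr hA0)]
    have := key t
    linarith
  have hgoal : (∫ τ in Ioi (0:ℝ), Real.exp (ω * τ / (1 - lam * ω)) *
      ⨆ x : {x : ℝ // x ≤ t - τ}, ‖ψ x.1 - φ x.1‖) = I t := by
    have hIt : I t = ∫ σ in Ioi (0:ℝ), Real.exp (γ*σ) * g (t-σ) := rfl
    rw [hIt]
    congr 1
    funext τ
    rw [show ω * τ / (1 - lam * ω) = γ * τ by rw [hγ_def]; ring]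
  calc ‖v t - w t‖ = u t := rfl
    _ ≤ c * g t + C * I t := hfin
    _ = c * (⨆ x : {x : ℝ // x ≤ t}, ‖ψ x.1 - φ x.1‖) + C *
        ∫ τ in Ioi (0:ℝ), Real.exp (ω * τ / (1 - lam * ω)) *
          ⨆ x : {x : ℝ // x ≤ t - τ}, ‖ψ x.1 - φ x.1‖ := by rw [hgoal]
end

section
/- Let $X$ be a Banach space, $\omega < 0$, $\lambda > 0$, $K_0, K_2 > 0$, $L_g \geq 0$ with $L_g + K_0 < -\omega$. Define $S_\lambda$ on bounded continuous $f : \mathbb{R} \to \mathbb{R}$ by $(S_\lambda f)(t) = \frac{K_0}{(1-\lambda(\omega+L_g))^2}\int_0^\infty \exp\left(\frac{(\omega+L_g)\tau}{1-\lambda(\omega+L_g)}\right)f(t-\tau)\,d\tau$. Then for $\lambda$ sufficiently small the operator $K_2\lambda I + S_\lambda$ has operator norm strictly less than $1$, and consequently any sequence of nonnegative bounded functions $(K_n)$ satisfying $K_{n+1} \leq K_2 + (K_2\lambda I + S_\lambda)K_n$ (pointwise) with $K_0$ bounded is uniformly bounded in $n$ and $t$. -/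
open MeasureTheory Set

lemma intExpIoi (b : ℝ) (hb : 0 < b) : ∫ x in Ioi (0:ℝ), Real.exp (-(b*x)) = b⁻¹ := by
  have h := integral_comp_mul_left_Ioi (fun x => Real.exp (-x)) 0 hb
  simp only [mul_zero, integral_exp_neg_Ioi, neg_zero, Real.exp_zero, smul_eq_mul, mul_one] at h
  exact h

lemma boundInt (b C : ℝ) (hb : 0 < b) (f : ℝ → ℝ) (hf : Continuous f)
    (hfC : ∀ s, |f s| ≤ C) (t : ℝ) :
    |∫ τ in Ioi (0:ℝ), Real.exp (-(b*τ)) * f (t - τ)| ≤ C / b := by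
  have hC : 0 ≤ C := le_trans (abs_nonneg _) (hfC 0)
  have hint : IntegrableOn (fun τ => C * Real.exp (-(b*τ))) (Ioi (0:ℝ)) := by
    simpa [neg_mul, IntegrableOn] using (exp_neg_integrableOn_Ioi 0 hb).const_mul C
  have h1 : |∫ τ in Ioi (0:ℝ), Real.exp (-(b*τ)) * f (t - τ)|
      ≤ ∫ τ in Ioi (0:ℝ), Real.exp (-(b*τ)) * |f (t - τ)| := by
    simpa [Real.norm_eq_abs] using
      norm_integral_le_integral_norm (μ := volume.restrict (Ioi (0:ℝ)))
        (fun τ => Real.exp (-(b*τ)) * f (t - τ))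
  have h2 : ∫ τ in Ioi (0:ℝ), Real.exp (-(b*τ)) * |f (t - τ)|
      ≤ ∫ τ in Ioi (0:ℝ), C * Real.exp (-(b*τ)) := by
    apply integral_mono_of_nonneg
    · filter_upwards with τ using mul_nonneg (Real.exp_pos _).le (abs_nonneg _)
    · exact hint
    · filter_upwards with τ
      have := hfC (t - τ)
      nlinarith [Real.exp_pos (-(b*τ))]
  have h3 : ∫ τ in Ioi (0:ℝ), C * Real.exp (-(b*τ)) = C / b := by
    rw [MeasureTheory.integral_const_mul, intExpIoi b hb, div_eq_mul_inv]
  linarith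

theorem stmt19 (ω K₀ K₂ Lg : ℝ) (hω : ω < 0) (hK₀ : 0 < K₀) (hK₂ : 0 < K₂)
    (hLg : 0 ≤ Lg) (hsmall : Lg + K₀ < -ω)
    (S : ℝ → (ℝ → ℝ) → (ℝ → ℝ))
    (hS : ∀ (lam : ℝ) (f : ℝ → ℝ) (t : ℝ),
        S lam f t = (K₀ / (1 - lam * (ω + Lg)) ^ 2) *
          ∫ τ in Ioi (0:ℝ), Real.exp ((ω + Lg) * τ / (1 - lam * (ω + Lg))) * f (t - τ)) :
    ∃ lam₀ > (0:ℝ), ∀ lam : ℝ, 0 < lam → lam < lam₀ →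
      ∃ q : ℝ, 0 ≤ q ∧ q < 1 ∧
        (∀ f : ℝ → ℝ, Continuous f → (∃ C, ∀ t, |f t| ≤ C) →
          (⨆ t : ℝ, |K₂ * lam * f t + S lam f t|) ≤ q * ⨆ t : ℝ, |f t|) ∧
        ∀ K : ℕ → ℝ → ℝ,
          (∀ n, Continuous (K n)) →
          (∀ n t, 0 ≤ K n t) →
          (∀ n, ∃ C, ∀ t, K n t ≤ C) →
          (∀ n t, K (n + 1) t ≤ K₂ + (K₂ * lam * K n t + S lam (K n) t)) →
          ∃ M : ℝ, ∀ n t, K n t ≤ M := by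
  set a : ℝ := ω + Lg with ha_def
  have haK : K₀ < -a := by simp only [ha_def]; linarith
  have ha : a < 0 := by linarith
  clear_value a
  set r : ℝ := K₀ / (-a) with hr_def
  clear_value r
  have hr0 : 0 < r := by rw [hr_def]; exact div_pos hK₀ (by linarith)
  have hr1 : r < 1 := by rw [hr_def]; exact (div_lt_one (by linarith)).2 haK
  refine ⟨(1 - r) / (2 * K₂), div_pos (by linarith) (by linarith), ?_⟩
  intro lam hlam hlam'
  set μ : ℝ := 1 - lam * a with hμ_def
  have hμ : 1 < μ := by rw [hμ_def]; nlinarith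
  clear_value μ
  have hμ0 : μ ≠ 0 := by linarith
  set b : ℝ := -a / μ with hb_def
  clear_value b
  have hb : 0 < b := by rw [hb_def]; exact div_pos (by linarith) (by linarith)
  set q : ℝ := K₂ * lam + r with hq_def
  clear_value q
  have hq0 : 0 ≤ q := by rw [hq_def]; nlinarith
  have hq1 : q < 1 := by
    have h : K₂ * lam < (1 - r) / 2 := by
      calc K₂ * lam < K₂ * ((1 - r) / (2 * K₂)) := mul_lt_mul_of_pos_left hlam' hK₂
        _ = (1 - r) / 2 := by field_simp
    rw [hq_def]; linarith
  -- pointwise key estimate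
  have key : ∀ f : ℝ → ℝ, Continuous f → (∃ C, ∀ t, |f t| ≤ C) →
      ∀ t, |K₂ * lam * f t + S lam f t| ≤ q * ⨆ t : ℝ, |f t| := by
    intro f hf hfb t
    obtain ⟨C, hC⟩ := hfb
    have hbdd : BddAbove (range fun t => |f t|) := ⟨C, by rintro _ ⟨s, rfl⟩; exact hC s⟩
    set Cs : ℝ := ⨆ t : ℝ, |f t| with hCs_def
    have hfCs : ∀ s, |f s| ≤ Cs := fun s => le_ciSup hbdd s
    clear_value Cs
    have hCs0 : 0 ≤ Cs := le_trans (abs_nonneg _) (hfCs 0)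
    have hexp : ∀ τ : ℝ, a * τ / μ = -(b * τ) := by
      intro τ; rw [hb_def]; field_simp
    have hSb : |S lam f t| ≤ r * Cs := by
      rw [hS]
      simp only [← ha_def, ← hμ_def]
      have hrw : (∫ τ in Ioi (0:ℝ), Real.exp (a * τ / μ) * f (t - τ))
          = ∫ τ in Ioi (0:ℝ), Real.exp (-(b * τ)) * f (t - τ) := by
        congr 1; funext τ; rw [hexp τ]
      rw [hrw, abs_mul, abs_of_pos (show (0:ℝ) < K₀ / μ ^ 2 by positivity)]
      have h1 := boundInt b Cs hb f hf hfCs t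
      have h2 : K₀ / μ ^ 2 * (Cs / b) = K₀ * Cs / (μ * (-a)) := by
        rw [hb_def, div_div_eq_mul_div, div_mul_div_comm,
          div_eq_div_iff (mul_pos (pow_pos (by linarith) 2) (by linarith : (0:ℝ) < -a)).ne'
            (mul_pos (by linarith) (by linarith : (0:ℝ) < -a)).ne']
        ring
      have h3 : K₀ * Cs / (μ * (-a)) ≤ K₀ * Cs / (-a) := by
        rw [div_le_div_iff₀ (by nlinarith) (by linarith)]
        nlinarith [mul_nonneg (mul_nonneg (mul_nonneg hK₀.le hCs0)
          (by linarith : (0:ℝ) ≤ -a)) (by linarith : (0:ℝ) ≤ μ - 1)]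
      have h4 : K₀ * Cs / (-a) = r * Cs := by rw [hr_def]; ring
      calc K₀ / μ ^ 2 * |∫ τ in Ioi (0:ℝ), Real.exp (-(b * τ)) * f (t - τ)|
          ≤ K₀ / μ ^ 2 * (Cs / b) :=
            mul_le_mul_of_nonneg_left h1 (by positivity)
        _ = K₀ * Cs / (μ * (-a)) := h2
        _ ≤ K₀ * Cs / (-a) := h3
        _ = r * Cs := h4
    calc |K₂ * lam * f t + S lam f t| ≤ |K₂ * lam * f t| + |S lam f t| := abs_add_le _ _
      _ ≤ K₂ * lam * Cs + r * Cs := by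
          refine add_le_add ?_ hSb
          rw [abs_mul, abs_of_pos (show (0:ℝ) < K₂ * lam by positivity)]
          exact mul_le_mul_of_nonneg_left (hfCs t) (by positivity)
      _ = q * Cs := by rw [hq_def]; ring
  refine ⟨q, hq0, hq1, fun f hf hfb => ciSup_le (key f hf hfb), ?_⟩
  intro K hKc hKnn hKb hKrec
  have supb : ∀ n, BddAbove (range fun t => |K n t|) := by
    intro n
    obtain ⟨C, hC⟩ := hKb n
    exact ⟨C, by rintro _ ⟨s, rfl⟩; exact (abs_of_nonneg (hKnn n s)).le.trans (hC s)⟩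
  have habsb : ∀ n, ∃ C, ∀ t, |K n t| ≤ C := by
    intro n
    obtain ⟨C, hC⟩ := hKb n
    exact ⟨C, fun t => (abs_of_nonneg (hKnn n t)).le.trans (hC t)⟩
  set B : ℝ := max (⨆ t : ℝ, |K 0 t|) (K₂ / (1 - q)) with hB_def
  have main : ∀ n, (⨆ t : ℝ, |K n t|) ≤ B := by
    intro n
    induction n with
    | zero => exact le_max_left _ _
    | succ n ih =>
      apply ciSup_le
      intro t
      rw [abs_of_nonneg (hKnn _ t)]
      have h1 : K (n + 1) t ≤ K₂ + (K₂ * lam * K n t + S lam (K n) t) := hKrec n t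
      have h2 : K₂ * lam * K n t + S lam (K n) t
          ≤ |K₂ * lam * K n t + S lam (K n) t| := le_abs_self _
      have h3 := key (K n) (hKc n) (habsb n) t
      have h4 : q * (⨆ t : ℝ, |K n t|) ≤ q * B := mul_le_mul_of_nonneg_left ih hq0
      have h5 : K₂ / (1 - q) ≤ B := le_max_right _ _
      have h6 : K₂ ≤ B * (1 - q) := (div_le_iff₀ (by linarith)).1 h5
      nlinarith
  refine ⟨B, fun n t => ?_⟩
  calc K n t ≤ |K n t| := le_abs_self _
    _ ≤ ⨆ t' : ℝ, |K n t'| := le_ciSup (supb n) t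
    _ ≤ B := main n
end
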